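/- Let (C₁, C₂) be a pair of subclasses of objects of a triangulated category C. Then (C₁, C₂) is a t-structure with C₁[1] = C₁ (where C₁ plays the role of C_{t≤0}) if and only if (C₂, C₁) is a weight structure with C₁[1] = C₁ (where C₂ = C_{w≤0}, C₁ = C_{w≥0}). -/

import Mathlib

open CategoryTheory CategoryTheory.Limits CategoryTheory.Pretriangulated ZeroObject

universe w' v u

variable (C : Type u) [Category.{v} C] [HasZeroObject C] [HasShift C ℤ]
  [Preadditive C] [∀ n : ℤ, (shiftFunctor C n).Additive] [Pretriangulated C]

/-- A t-structure `t = (C_{t≤0}, C_{t≥0})` on a triangulated category, in the homological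
convention of the paper.  `le` is the class `C_{t≤0}` and `ge` is the class `C_{t≥0}`.
The condition `C_{t≤0} ⊆ C_{t≤0}[1]` is encoded as `le X → le (X⟦-1⟧)` (the classes being
closed under isomorphism), and `C_{t≥0}[1] ⊆ C_{t≥0}` as `ge X → ge (X⟦1⟧)`.
The class `C_{t≤i} = C_{t≤0}[i]` is `fun X => le (X⟦-i⟧)` and similarly for `C_{t≥i}`. -/
structure PaperTStructure where
  /-- the class `C_{t≤0}` -/
  le : C → Prop
  /-- the class `C_{t≥0}` -/
  ge : C → Prop
  le_iso : ∀ {X Y : C}, (X ≅ Y) → le X → le Y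
  ge_iso : ∀ {X Y : C}, (X ≅ Y) → ge X → ge Y
  le_shift : ∀ X : C, le X → le (X⟦(-1 : ℤ)⟧)
  ge_shift : ∀ X : C, ge X → ge (X⟦(1 : ℤ)⟧)
  /-- `C_{t≥0}[1] ⊥ C_{t≤0}` -/
  orth : ∀ (X Y : C), ge X → le Y → ∀ f : X⟦(1 : ℤ)⟧ ⟶ Y, f = 0
  /-- every object `M` admits a `t`-decomposition `L → M → R → L[1]` with `L ∈ C_{t≥0}`,
  `R ∈ C_{t≤0}[-1]` (i.e. `R⟦1⟧ ∈ C_{t≤0}`) -/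
  decomp : ∀ M : C, ∃ (L R : C) (f : L ⟶ M) (g : M ⟶ R) (h : R ⟶ L⟦(1 : ℤ)⟧),
    (Triangle.mk f g h ∈ distTriang C) ∧ ge L ∧ le (R⟦(1 : ℤ)⟧)

/-- A weight structure `w = (C_{w≤0}, C_{w≥0})` on a triangulated category, in the homological
convention of the paper.  `le` is the class `C_{w≤0}` and `ge` is the class `C_{w≥0}`;
both are retraction-closed.  `C_{w≤i} = C_{w≤0}[i]` is `fun X => le (X⟦-i⟧)`, similarly `ge`. -/
structure PaperWeightStructure where
  /-- the class `C_{w≤0}` -/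
  le : C → Prop
  /-- the class `C_{w≥0}` -/
  ge : C → Prop
  le_retract : ∀ (X Y : C), le Y → (∃ (i : X ⟶ Y) (r : Y ⟶ X), i ≫ r = 𝟙 X) → le X
  ge_retract : ∀ (X Y : C), ge Y → (∃ (i : X ⟶ Y) (r : Y ⟶ X), i ≫ r = 𝟙 X) → ge X
  le_shift : ∀ X : C, le X → le (X⟦(-1 : ℤ)⟧)
  ge_shift : ∀ X : C, ge X → ge (X⟦(1 : ℤ)⟧)
  /-- `C_{w≤0} ⊥ C_{w≥0}[1]` -/
  orth : ∀ (X Y : C), le X → ge Y → ∀ f : X ⟶ Y⟦(1 : ℤ)⟧, f = 0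
  /-- every object `M` admits a weight decomposition `L → M → R → L[1]` with `L ∈ C_{w≤0}`,
  `R ∈ C_{w≥0}[1]` (i.e. `R⟦-1⟧ ∈ C_{w≥0}`) -/
  decomp : ∀ M : C, ∃ (L R : C) (f : L ⟶ M) (g : M ⟶ R) (h : R ⟶ L⟦(1 : ℤ)⟧),
    (Triangle.mk f g h ∈ distTriang C) ∧ le L ∧ ge (R⟦(-1 : ℤ)⟧)

/-- A class of objects is extension-closed if it contains `0` and for every distinguished
triangle `X → Y → Z → X[1]` with `X, Z` in the class, `Y` lies in the class. -/
def ExtClosed (P : C → Prop) : Prop :=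
  P (0 : C) ∧ ∀ T : Triangle C, (T ∈ distTriang C) → P T.obj₁ → P T.obj₃ → P T.obj₂

/-- A class of objects is retraction-closed if it contains all retracts of its elements. -/
def RetractClosed (P : C → Prop) : Prop :=
  ∀ X Y : C, P Y → (∃ (i : X ⟶ Y) (r : Y ⟶ X), i ≫ r = 𝟙 X) → P X

section Aux

variable {C}

lemma aux_shift_map_eq_zero {A B : C} (f : A ⟶ B)
    (hf : (shiftFunctor C (1 : ℤ)).map f = 0) : f = 0 :=
  ((shiftFunctor C (1 : ℤ)).map_eq_zero_iff).1 hf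

/-- forward direction: a t-structure with shift-invariant `le` gives a weight structure. -/
lemma t_to_w (t : PaperTStructure C) (hC : ∀ X : C, t.le (X⟦(1 : ℤ)⟧) ↔ t.le X) :
    ∃ w : PaperWeightStructure C, w.le = t.ge ∧ w.ge = t.le := by
  have leup : ∀ X : C, t.le X → t.le (X⟦(1 : ℤ)⟧) := fun X h => (hC X).2 h
  -- the left orthogonal of `t.le`
  set ge' : C → Prop := fun X => ∀ Y, t.le Y → ∀ f : X⟦(1 : ℤ)⟧ ⟶ Y, f = 0 with hge'def
  have hge'1 : ∀ X, t.ge X → ge' X := fun X h Y hY f => t.orth X Y h hY f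
  have hge'hom : ∀ X Y, ge' X → t.le Y → ∀ f : X ⟶ Y, f = 0 := by
    intro X Y hX hY f
    exact aux_shift_map_eq_zero f (hX (Y⟦(1 : ℤ)⟧) (leup Y hY) ((shiftFunctor C (1 : ℤ)).map f))
  have hge'2 : ∀ X, ge' X → t.ge X := by
    intro X hX
    obtain ⟨L, R, f, g, h, hT, hL, hR⟩ := t.decomp X
    have hg : g = 0 :=
      aux_shift_map_eq_zero g (hX (R⟦(1 : ℤ)⟧) hR ((shiftFunctor C (1 : ℤ)).map g))
    obtain ⟨ψ, hψ⟩ := Pretriangulated.Triangle.yoneda_exact₃ _ hT (𝟙 R)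
      ((Category.comp_id g).trans hg)
    have hψ0 : ψ = 0 := t.orth L R hL ((hC R).1 hR) ψ
    have hzero : IsZero R := by
      rw [IsZero.iff_id_eq_zero, hψ, hψ0, comp_zero]; exact rfl
    have : IsIso f := (Pretriangulated.Triangle.isZero₃_iff_isIso₁ _ hT).1 hzero
    exact t.ge_iso (asIso f) hL
  have hge'retract : ∀ X Y, ge' Y → (∃ (i : X ⟶ Y) (r : Y ⟶ X), i ≫ r = 𝟙 X) → ge' X := by
    rintro X Y hY ⟨i, r, hir⟩ Z hZ f
    have h0 : (shiftFunctor C (1 : ℤ)).map r ≫ f = 0 := hY Z hZ _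
    calc f = (shiftFunctor C (1 : ℤ)).map (i ≫ r) ≫ f := by rw [hir]; simp
    _ = (shiftFunctor C (1 : ℤ)).map i ≫ ((shiftFunctor C (1 : ℤ)).map r ≫ f) := by
        rw [Functor.map_comp, Category.assoc]
    _ = 0 := by rw [h0, comp_zero]
  have hge'down : ∀ X, ge' X → ge' (X⟦(-1 : ℤ)⟧) := by
    intro X hX Y hY f
    have h0 : (shiftNegShift X (1 : ℤ)).inv ≫ f = 0 :=
      hge'hom X Y hX hY ((shiftNegShift X (1 : ℤ)).inv ≫ f)
    calc f = (shiftNegShift X (1 : ℤ)).hom ≫ ((shiftNegShift X (1 : ℤ)).inv ≫ f) := by simp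
    _ = 0 := by rw [h0, comp_zero]
  -- the right orthogonal of `ge'`
  set le' : C → Prop := fun Y => ∀ X, ge' X → ∀ f : X⟦(1 : ℤ)⟧ ⟶ Y, f = 0 with hle'def
  have hle'1 : ∀ Y, t.le Y → le' Y := fun Y hY X hX f => hX Y hY f
  have hle'retract : ∀ X Y, le' Y → (∃ (i : X ⟶ Y) (r : Y ⟶ X), i ≫ r = 𝟙 X) → le' X := by
    rintro X Y hY ⟨i, r, hir⟩ Z hZ f
    have h0 : (f ≫ i) ≫ r = 0 := by rw [hY Z hZ (f ≫ i), zero_comp]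
    calc f = (f ≫ i) ≫ r := by rw [Category.assoc, hir, Category.comp_id]
    _ = 0 := h0
  have hle'2 : ∀ Y, le' Y → t.le Y := by
    intro Y hY
    obtain ⟨L, R, f, g, h, hT, hL, hR⟩ := t.decomp Y
    have hgeL : ge' L := hge'1 L hL
    have hf : f = 0 := by
      have h0 : (shiftNegShift L (1 : ℤ)).hom ≫ f = 0 :=
        hY (L⟦(-1 : ℤ)⟧) (hge'down L hgeL) _
      calc f = (shiftNegShift L (1 : ℤ)).inv ≫ ((shiftNegShift L (1 : ℤ)).hom ≫ f) := by simp
      _ = 0 := by rw [h0, comp_zero]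
    obtain ⟨ψ, hψ⟩ := Pretriangulated.Triangle.coyoneda_exact₂ _
      (inv_rot_of_distTriang _ hT) (𝟙 L) ((Category.id_comp f).trans hf)
    have hψ0 : ψ = 0 := by
      have hleR : t.le (R⟦(-1 : ℤ)⟧) := t.le_shift R ((hC R).1 hR)
      exact hge'hom L (R⟦(-1 : ℤ)⟧) hgeL hleR ψ
    have hzero : IsZero L := by
      rw [IsZero.iff_id_eq_zero, hψ, hψ0, zero_comp]; exact rfl
    have : IsIso g := (Pretriangulated.Triangle.isZero₁_iff_isIso₂ _ hT).1 hzero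
    have hYR : t.le (Y⟦(1 : ℤ)⟧) :=
      t.le_iso ((shiftFunctor C (1 : ℤ)).mapIso (asIso g)).symm hR
    exact (hC Y).1 hYR
  refine ⟨{
    le := t.ge
    ge := t.le
    le_retract := fun X Y hY hr => hge'2 X (hge'retract X Y (hge'1 Y hY) hr)
    ge_retract := fun X Y hY hr => hle'2 X (hle'retract X Y (hle'1 Y hY) hr)
    le_shift := fun X hX => hge'2 _ (hge'down X (hge'1 X hX))
    ge_shift := fun X hX => leup X hX
    orth := fun X Y hX hY f => hge'hom X (Y⟦(1 : ℤ)⟧) (hge'1 X hX) (leup Y hY) f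
    decomp := by
      intro M
      obtain ⟨L, R, f, g, h, hT, hL, hR⟩ := t.decomp M
      exact ⟨L, R, f, g, h, hT, hL, t.le_shift R ((hC R).1 hR)⟩ }, rfl, rfl⟩

/-- backward direction: a weight structure with shift-invariant `ge` gives a t-structure. -/
lemma w_to_t (w : PaperWeightStructure C) (hC : ∀ X : C, w.ge (X⟦(1 : ℤ)⟧) ↔ w.ge X) :
    ∃ t : PaperTStructure C, t.le = w.ge ∧ t.ge = w.le := by
  have geIso : ∀ {X Y : C}, (X ≅ Y) → w.ge Y → w.ge X :=
    fun e h => w.ge_retract _ _ h ⟨e.hom, e.inv, e.hom_inv_id⟩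
  have leIso : ∀ {X Y : C}, (X ≅ Y) → w.le Y → w.le X :=
    fun e h => w.le_retract _ _ h ⟨e.hom, e.inv, e.hom_inv_id⟩
  have gedown : ∀ X : C, w.ge X → w.ge (X⟦(-1 : ℤ)⟧) :=
    fun X h => (hC (X⟦(-1 : ℤ)⟧)).1 (geIso (shiftNegShift X (1 : ℤ)) h)
  set le' : C → Prop := fun X => ∀ Y, w.ge Y → ∀ f : X ⟶ Y⟦(1 : ℤ)⟧, f = 0 with hle'def
  have hle'1 : ∀ X, w.le X → le' X := fun X h Y hY f => w.orth X Y h hY f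
  have hle'2 : ∀ X, le' X → w.le X := by
    intro X hX
    obtain ⟨L, R, f, g, h, hT, hL, hR⟩ := w.decomp X
    have hg : g = 0 := by
      have h0 : g ≫ (shiftNegShift R (1 : ℤ)).inv = 0 := hX (R⟦(-1 : ℤ)⟧) hR _
      calc g = (g ≫ (shiftNegShift R (1 : ℤ)).inv) ≫ (shiftNegShift R (1 : ℤ)).hom := by rw [Category.assoc, Iso.inv_hom_id, Category.comp_id]
      _ = 0 := by rw [h0, zero_comp]
    obtain ⟨s, hs⟩ := Pretriangulated.Triangle.coyoneda_exact₂ _ hT (𝟙 X)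
      ((Category.id_comp g).trans hg)
    exact w.le_retract X L hL ⟨s, f, hs.symm⟩
  have hle'up : ∀ X, le' X → le' (X⟦(1 : ℤ)⟧) := by
    intro X hX Y hY f
    set g := (shiftFunctor C (1 : ℤ)).preimage f with hgdef
    have hg : g = 0 := by
      have h0 : g ≫ (shiftNegShift Y (1 : ℤ)).inv = 0 := hX (Y⟦(-1 : ℤ)⟧) (gedown Y hY) _
      calc g = (g ≫ (shiftNegShift Y (1 : ℤ)).inv) ≫ (shiftNegShift Y (1 : ℤ)).hom := by rw [Category.assoc, Iso.inv_hom_id, Category.comp_id]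
      _ = 0 := by rw [h0, zero_comp]
    calc f = (shiftFunctor C (1 : ℤ)).map g := ((shiftFunctor C (1 : ℤ)).map_preimage f).symm
    _ = 0 := by rw [hg, Functor.map_zero]
  refine ⟨{
    le := w.ge
    ge := w.le
    le_iso := fun e h => geIso e.symm h
    ge_iso := fun e h => leIso e.symm h
    le_shift := gedown
    ge_shift := fun X hX => hle'2 _ (hle'up X (hle'1 X hX))
    orth := by
      intro X Y hX hY f
      have h0 : f ≫ (shiftNegShift Y (1 : ℤ)).inv = 0 :=
        hle'up X (hle'1 X hX) (Y⟦(-1 : ℤ)⟧) (gedown Y hY) _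
      calc f = (f ≫ (shiftNegShift Y (1 : ℤ)).inv) ≫ (shiftNegShift Y (1 : ℤ)).hom := by rw [Category.assoc, Iso.inv_hom_id, Category.comp_id]
      _ = 0 := by rw [h0, zero_comp]
    decomp := by
      intro M
      obtain ⟨L, R, f, g, h, hT, hL, hR⟩ := w.decomp M
      refine ⟨L, R, f, g, h, hT, hL, ?_⟩
      exact (hC R).2 (geIso (shiftNegShift R (1 : ℤ)).symm ((hC (R⟦(-1 : ℤ)⟧)).2 hR)) }, rfl, rfl⟩

end Aux

/-- for classes `C₁, C₂` of objects, `(C₁, C₂)` is a t-structure with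
`C₁[1] = C₁` (with `C₁` playing the role of `C_{t≤0}` and `C₂` of `C_{t≥0}`) if and only if
`(C₂, C₁)` is a weight structure with `C₁[1] = C₁` (with `C₂ = C_{w≤0}`, `C₁ = C_{w≥0}`). -/
theorem stmt9 (C₁ C₂ : C → Prop) :
    ((∃ t : PaperTStructure C, t.le = C₁ ∧ t.ge = C₂) ∧ (∀ X : C, C₁ (X⟦(1 : ℤ)⟧) ↔ C₁ X)) ↔
    ((∃ w : PaperWeightStructure C, w.le = C₂ ∧ w.ge = C₁) ∧
      (∀ X : C, C₁ (X⟦(1 : ℤ)⟧) ↔ C₁ X)) := by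
  constructor
  · rintro ⟨⟨t, hle, hge⟩, hC⟩
    subst hle; subst hge
    obtain ⟨w, h1, h2⟩ := t_to_w t hC
    exact ⟨⟨w, h1, h2⟩, hC⟩
  · rintro ⟨⟨w, hle, hge⟩, hC⟩
    subst hle; subst hge
    obtain ⟨t, h1, h2⟩ := w_to_t w hC
    exact ⟨⟨t, h1, h2⟩, hC⟩
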